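/- Let u : ℝ² → ℝ be a twice continuously differentiable function of (y,τ) satisfying the sinh-Gordon equation u_{yτ} = sinh u. Define v, w : ℝ³ → ℝ of the variables (x,y,τ) by v(x,y,τ) = u_y(y,τ) cos x and w(x,y,τ) = −sinh(u(y,τ)) sin x + cosh(u(y,τ)). Then (v,w) solves the system (max1): v_τ + w_x = 0 and w_y + v w_x − w v_x = 0. -/

import Mathlib

noncomputable def Lmap : (Fin 3 → ℝ) →L[ℝ] (Fin 2 → ℝ) :=
  ContinuousLinearMap.pi ![ContinuousLinearMap.proj 1, ContinuousLinearMap.proj 2]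

lemma Lmap_apply (x : Fin 3 → ℝ) : Lmap x = ![x 1, x 2] := by
  funext i; fin_cases i <;> rfl

lemma Lmap_single0 : Lmap (Pi.single (0:Fin 3) (1:ℝ)) = 0 := by
  funext i; fin_cases i <;> simp [Lmap]

lemma Lmap_single1 : Lmap (Pi.single (1:Fin 3) (1:ℝ)) = Pi.single (0:Fin 2) 1 := by
  funext i; fin_cases i <;> simp [Lmap]

lemma Lmap_single2 : Lmap (Pi.single (2:Fin 3) (1:ℝ)) = Pi.single (1:Fin 2) 1 := by
  funext i; fin_cases i <;> simp [Lmap]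


/-- Partial derivative of `f : ℝⁿ → ℝ` in the `i`-th coordinate direction. -/
noncomputable def pd {n : ℕ} (i : Fin n) (f : (Fin n → ℝ) → ℝ) (x : Fin n → ℝ) : ℝ :=
  fderiv ℝ f x (Pi.single i 1)

/-- `u` has coordinates `(y,τ)` = indices `(0,1)`; `v, w` have coordinates `(x,y,τ)` =
indices `(0,1,2)`.  If a C² function `u` satisfies the sinh-Gordon equation
`u_{yτ} = sinh u`, then `v = u_y cos x` and `w = −sinh u sin x + cosh u` solve (max1):
`v_τ + w_x = 0`, `w_y + v w_x − w v_x = 0`. -/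
theorem stmt9 (u : (Fin 2 → ℝ) → ℝ) (hu : ContDiff ℝ 2 u)
    (hSG : ∀ p : Fin 2 → ℝ, pd 1 (pd 0 u) p = Real.sinh (u p))
    (v w : (Fin 3 → ℝ) → ℝ)
    (hvdef : ∀ x : Fin 3 → ℝ, v x = pd 0 u ![x 1, x 2] * Real.cos (x 0))
    (hwdef : ∀ x : Fin 3 → ℝ,
        w x = -Real.sinh (u ![x 1, x 2]) * Real.sin (x 0) + Real.cosh (u ![x 1, x 2])) :
    (∀ x, pd 2 v x + pd 0 w x = 0) ∧
    (∀ x, pd 1 w x + v x * pd 0 w x - w x * pd 0 v x = 0) := by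
  -- G = u_y
  set G : (Fin 2 → ℝ) → ℝ := pd 0 u with hGdef
  have hG : ContDiff ℝ 1 G := by
    have h1 : ContDiff ℝ 1 (fderiv ℝ u) := hu.fderiv_right (by norm_num)
    exact (ContinuousLinearMap.apply ℝ ℝ (Pi.single (0:Fin 2) (1:ℝ))).contDiff.comp h1
  have hudiff : Differentiable ℝ u := hu.differentiable (by norm_num)
  -- rewrite v and w
  have hv' : v = fun x => G (Lmap x) * Real.cos (x 0) := by
    funext x; rw [hvdef x, Lmap_apply]
  have hw' : w = fun x => -Real.sinh (u (Lmap x)) * Real.sin (x 0) + Real.cosh (u (Lmap x)) := by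
    funext x; rw [hwdef x, Lmap_apply]
  -- pointwise derivatives
  have key : ∀ x : Fin 3 → ℝ,
      pd 0 v x = -(G (Lmap x)) * Real.sin (x 0) ∧
      pd 2 v x = Real.sinh (u (Lmap x)) * Real.cos (x 0) ∧
      pd 0 w x = -Real.sinh (u (Lmap x)) * Real.cos (x 0) ∧
      pd 1 w x = -Real.cosh (u (Lmap x)) * G (Lmap x) * Real.sin (x 0)
                 + Real.sinh (u (Lmap x)) * G (Lmap x) := by
    intro x
    have hGL : HasFDerivAt (fun x => G (Lmap x))
        ((fderiv ℝ G (Lmap x)).comp Lmap) x :=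
      ((hG.differentiable (by norm_num) (Lmap x)).hasFDerivAt).comp x Lmap.hasFDerivAt
    have hUL : HasFDerivAt (fun x => u (Lmap x))
        ((fderiv ℝ u (Lmap x)).comp Lmap) x :=
      ((hudiff (Lmap x)).hasFDerivAt).comp x Lmap.hasFDerivAt
    have hproj := (ContinuousLinearMap.proj (0:Fin 3) :
        (Fin 3 → ℝ) →L[ℝ] ℝ).hasFDerivAt (x := x)
    have hcos : HasFDerivAt (fun x : Fin 3 → ℝ => Real.cos (x 0))
        ((-Real.sin (x 0)) • (ContinuousLinearMap.proj 0 : (Fin 3 → ℝ) →L[ℝ] ℝ)) x :=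
      by have := (Real.hasDerivAt_cos (x 0)).comp_hasFDerivAt x hproj; exact this
    have hsin : HasFDerivAt (fun x : Fin 3 → ℝ => Real.sin (x 0))
        ((Real.cos (x 0)) • (ContinuousLinearMap.proj 0 : (Fin 3 → ℝ) →L[ℝ] ℝ)) x :=
      by have := (Real.hasDerivAt_sin (x 0)).comp_hasFDerivAt x hproj; exact this
    have hsinh : HasFDerivAt (fun x => Real.sinh (u (Lmap x)))
        (Real.cosh (u (Lmap x)) • ((fderiv ℝ u (Lmap x)).comp Lmap)) x :=
      by have := (Real.hasDerivAt_sinh (u (Lmap x))).comp_hasFDerivAt x hUL; exact this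
    have hcosh : HasFDerivAt (fun x => Real.cosh (u (Lmap x)))
        (Real.sinh (u (Lmap x)) • ((fderiv ℝ u (Lmap x)).comp Lmap)) x :=
      by have := (Real.hasDerivAt_cosh (u (Lmap x))).comp_hasFDerivAt x hUL; exact this
    have hv2 : HasFDerivAt v
        (G (Lmap x) • ((-Real.sin (x 0)) • (ContinuousLinearMap.proj 0 : (Fin 3 → ℝ) →L[ℝ] ℝ))
          + Real.cos (x 0) • ((fderiv ℝ G (Lmap x)).comp Lmap)) x := by
      rw [hv']; exact hGL.mul hcos
    have hw2 : HasFDerivAt w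
        (((-Real.sinh (u (Lmap x))) • ((Real.cos (x 0)) • (ContinuousLinearMap.proj 0 : (Fin 3 → ℝ) →L[ℝ] ℝ))
          + Real.sin (x 0) • (-(Real.cosh (u (Lmap x)) • ((fderiv ℝ u (Lmap x)).comp Lmap))))
          + Real.sinh (u (Lmap x)) • ((fderiv ℝ u (Lmap x)).comp Lmap)) x := by
      rw [hw']; exact (hsinh.neg.mul hsin).add hcosh
    have hDU0 : (fderiv ℝ u (Lmap x)) (Lmap (Pi.single (0:Fin 3) 1)) = 0 := by
      rw [Lmap_single0]; simp
    have hDU1 : (fderiv ℝ u (Lmap x)) (Lmap (Pi.single (1:Fin 3) 1)) = G (Lmap x) := by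
      rw [Lmap_single1]; rfl
    have hDG0 : (fderiv ℝ G (Lmap x)) (Lmap (Pi.single (0:Fin 3) 1)) = 0 := by
      rw [Lmap_single0]; simp
    have hDG2 : (fderiv ℝ G (Lmap x)) (Lmap (Pi.single (2:Fin 3) 1)) = Real.sinh (u (Lmap x)) := by
      rw [Lmap_single2]; exact hSG (Lmap x)
    refine ⟨?_, ?_, ?_, ?_⟩
    · rw [show pd 0 v x = _ from congrFun (congrArg _ hv2.fderiv) _]
      simp [hDG0]
      try ring
    · rw [show pd 2 v x = _ from congrFun (congrArg _ hv2.fderiv) _]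
      simp [hDG2, Pi.single_apply]
      try ring
    · rw [show pd 0 w x = _ from congrFun (congrArg _ hw2.fderiv) _]
      simp [hDU0]
      try ring
    · rw [show pd 1 w x = _ from congrFun (congrArg _ hw2.fderiv) _]
      simp [hDU1, Pi.single_apply]
      try ring
  constructor
  · intro x
    obtain ⟨_, h2, h3, _⟩ := key x
    rw [h2, h3]; ring
  · intro x
    obtain ⟨h1, _, h3, h4⟩ := key x
    rw [h1, h3, h4, hvdef x, hwdef x, ← Lmap_apply]
    have := Real.sin_sq_add_cos_sq (x 0)
    linear_combination (-(Real.sinh (u (Lmap x)) * G (Lmap x))) * this
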